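/- arXiv:2209.03602 — 3 statements merged into one kernel-verified Lean document; each statement's English description precedes it below -/
import Mathlib

section
/- Farkas' Lemma: let Φ be a satisfiable system of affine inequalities {a_{i,0} + Σⱼ a_{i,j} xⱼ ≥ 0 : i = 1,...,m} over ℝ^r. Then Φ entails an affine inequality c₀ + Σⱼ cⱼ xⱼ ≥ 0 if and only if there exist nonnegative reals y₀,...,y_m with c₀ = y₀ + Σᵢ yᵢ a_{i,0} and cⱼ = Σᵢ yᵢ a_{i,j} for each j = 1,...,r. -/
open Finset

private lemma nonnegOrthant_closed (k : ℕ) : IsClosed {t : Fin k → ℝ | ∀ i, 0 ≤ t i} := by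
  have : {t : Fin k → ℝ | ∀ i, 0 ≤ t i} = ⋂ i, {t | 0 ≤ t i} := by
    ext t; simp [Set.mem_iInter]
  rw [this]
  exact isClosed_iInter fun i => isClosed_le continuous_const (continuous_apply i)

private lemma cone_closed {N : ℕ} : ∀ (n : ℕ) (v : Fin n → EuclideanSpace ℝ (Fin N)),
    IsClosed {x : EuclideanSpace ℝ (Fin N) |
      ∃ t : Fin n → ℝ, (∀ i, 0 ≤ t i) ∧ ∑ i, t i • v i = x} := by
  intro n
  induction n using Nat.strong_induction_on with
  | _ n IH =>
  intro v
  by_cases hli : LinearIndependent ℝ v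
  · set L : (Fin n → ℝ) →ₗ[ℝ] EuclideanSpace ℝ (Fin N) := Fintype.linearCombination ℝ v with hL
    have hker : LinearMap.ker L = ⊥ := by
      rw [LinearMap.ker_eq_bot']
      intro t ht
      have := Fintype.linearIndependent_iff.mp hli t ?_
      · funext i; exact this i
      · simpa [hL, Fintype.linearCombination_apply] using ht
    have hemb := LinearMap.isClosedEmbedding_of_injective hker
    have himg : {x : EuclideanSpace ℝ (Fin N) |
        ∃ t : Fin n → ℝ, (∀ i, 0 ≤ t i) ∧ ∑ i, t i • v i = x}
        = L '' {t | ∀ i, 0 ≤ t i} := by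
      ext x
      simp only [Set.mem_setOf_eq, Set.mem_image, hL, Fintype.linearCombination_apply]
    rw [himg]
    exact hemb.isClosedMap _ (nonnegOrthant_closed n)
  · obtain ⟨g, hg0, i₁, hi₁⟩ := Fintype.not_linearIndependent_iff.mp hli
    obtain ⟨c, hc0, ip, hip⟩ : ∃ c : Fin n → ℝ, ∑ i, c i • v i = 0 ∧ ∃ i, 0 < c i := by
      rcases lt_or_ge 0 (g i₁) with h | h
      · exact ⟨g, hg0, i₁, h⟩
      · refine ⟨-g, by simpa using hg0, i₁, ?_⟩
        simpa using lt_of_le_of_ne h hi₁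
    obtain ⟨m, hmpos⟩ : ∃ m : ℕ, n = m + 1 := by
      cases n with
      | zero => exact absurd ip.elim0 id
      | succ k => exact ⟨k, rfl⟩
    subst hmpos
    have key : {x : EuclideanSpace ℝ (Fin N) |
        ∃ t : Fin (m+1) → ℝ, (∀ i, 0 ≤ t i) ∧ ∑ i, t i • v i = x}
        = ⋃ p : Fin (m+1), {x | ∃ s : Fin m → ℝ, (∀ j, 0 ≤ s j) ∧
            ∑ j, s j • v (p.succAbove j) = x} := by
      ext x
      simp only [Set.mem_setOf_eq, Set.mem_iUnion]
      constructor
      · rintro ⟨t, ht, rfl⟩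
        have hne : ({i | 0 < c i} : Finset (Fin (m+1))).Nonempty := ⟨ip, by simpa using hip⟩
        obtain ⟨p, hpmem, hpmin⟩ := Finset.exists_min_image _ (fun i => t i / c i) hne
        have hcp : 0 < c p := by simpa using hpmem
        set lam := t p / c p with hlam
        have hlam0 : 0 ≤ lam := div_nonneg (ht p) hcp.le
        set t' : Fin (m+1) → ℝ := fun i => t i - lam * c i with ht'
        have ht'0 : ∀ i, 0 ≤ t' i := by
          intro i
          rcases lt_or_ge 0 (c i) with h | h
          · have hmin := hpmin i (by simpa using h)
            have : lam * c i ≤ t i := by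
              rw [hlam]
              calc t p / c p * c i ≤ t i / c i * c i :=
                    mul_le_mul_of_nonneg_right hmin h.le
                _ = t i := by field_simp
            simp only [ht']; linarith
          · have : lam * c i ≤ 0 := mul_nonpos_of_nonneg_of_nonpos hlam0 h
            simp only [ht']; nlinarith [ht i]
        have ht'p : t' p = 0 := by
          simp only [ht', hlam]
          field_simp
          ring
        have hsum : ∑ i, t' i • v i = ∑ i, t i • v i := by
          simp only [ht', sub_smul, Finset.sum_sub_distrib, mul_smul]
          rw [← Finset.smul_sum, hc0, smul_zero, sub_zero]
        refine ⟨p, fun j => t' (p.succAbove j), fun j => ht'0 _, ?_⟩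
        rw [← hsum, Fin.sum_univ_succAbove (fun i => t' i • v i) p, ht'p, zero_smul, zero_add]
      · rintro ⟨p, s, hs, rfl⟩
        refine ⟨p.insertNth 0 s, ?_, ?_⟩
        · intro i
          by_cases hip' : i = p
          · subst hip'; simp
          · obtain ⟨j, rfl⟩ := Fin.exists_succAbove_eq hip'
            simpa using hs j
        · rw [Fin.sum_univ_succAbove (fun i => (p.insertNth (0:ℝ) s : Fin (m+1) → ℝ) i • v i) p]
          simp
    rw [key]
    exact isClosed_iUnion_of_finite fun p => IH m (Nat.lt_succ_self m) _

open RealInnerProductSpace in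
private lemma cone_mem_of_dual {N n : ℕ} (v : Fin n → EuclideanSpace ℝ (Fin N))
    (w : EuclideanSpace ℝ (Fin N))
    (h : ∀ y : EuclideanSpace ℝ (Fin N), (∀ i, 0 ≤ ⟪v i, y⟫) → 0 ≤ ⟪y, w⟫) :
    ∃ t : Fin n → ℝ, (∀ i, 0 ≤ t i) ∧ ∑ i, t i • v i = w := by
  by_contra hb
  let K : ConvexCone ℝ (EuclideanSpace ℝ (Fin N)) :=
    { carrier := {x | ∃ t : Fin n → ℝ, (∀ i, 0 ≤ t i) ∧ ∑ i, t i • v i = x}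
      smul_mem' := by
        rintro a ha x ⟨t, ht, rfl⟩
        exact ⟨fun i => a * t i, fun i => mul_nonneg ha.le (ht i), by
          rw [Finset.smul_sum]; exact Finset.sum_congr rfl fun i _ => mul_smul _ _ _⟩
      add_mem' := by
        rintro x ⟨t, ht, rfl⟩ z ⟨s, hs, rfl⟩
        exact ⟨t + s, fun i => add_nonneg (ht i) (hs i), by
          simp [add_smul, Finset.sum_add_distrib]⟩ }
  have hbK : w ∉ K := fun hm => hb hm
  obtain ⟨y, hy1, hy2⟩ := ProperCone.hyperplane_separation'
    (⟨K.toPointedCone (ConvexCone.Pointed.of_nonempty_of_isClosed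
      ⟨0, ⟨fun _ => 0, fun _ => le_refl 0, by simp⟩⟩ (cone_closed n v)), cone_closed n v⟩ :
      ProperCone ℝ (EuclideanSpace ℝ (Fin N))) hbK
  have hvy : ∀ k, 0 ≤ ⟪v k, y⟫ := by
    intro k
    refine hy1 _ ⟨Pi.single k 1, fun i => ?_, ?_⟩
    · rcases eq_or_ne i k with rfl | hik
      · simp
      · simp [Pi.single_eq_of_ne hik]
    · rw [Finset.sum_eq_single k (fun i _ hik => by simp [Pi.single_eq_of_ne hik]) (by simp)]
      simp
  exact absurd (h y hvy) (not_le.mpr (by rwa [real_inner_comm] at hy2))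

open RealInnerProductSpace



/-- Farkas' Lemma: a satisfiable system of affine inequalities
`bᵢ + Σⱼ Aᵢⱼ xⱼ ≥ 0` entails the affine inequality `c₀ + Σⱼ cⱼ xⱼ ≥ 0`
iff there are nonnegative reals `y₀, y₁, …, y_m` with
`c₀ = y₀ + Σᵢ yᵢ bᵢ` and `cⱼ = Σᵢ yᵢ Aᵢⱼ` for each `j`. -/
theorem farkas_lemma {r m : ℕ} (b : Fin m → ℝ) (A : Fin m → Fin r → ℝ)
    (c₀ : ℝ) (c : Fin r → ℝ)
    (hsat : ∃ x : Fin r → ℝ, ∀ i, 0 ≤ b i + ∑ j, A i j * x j) :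
    (∀ x : Fin r → ℝ, (∀ i, 0 ≤ b i + ∑ j, A i j * x j) →
        0 ≤ c₀ + ∑ j, c j * x j) ↔
      ∃ (y₀ : ℝ) (y : Fin m → ℝ), 0 ≤ y₀ ∧ (∀ i, 0 ≤ y i) ∧
        c₀ = y₀ + ∑ i, y i * b i ∧ ∀ j, c j = ∑ i, y i * A i j := by
  constructor
  · intro h
    let g : Fin (m+1) → EuclideanSpace ℝ (Fin (r+1)) := fun k =>
      Fin.cases (WithLp.toLp 2 (fun idx => Fin.cases 1 (fun _ => 0) idx : Fin (r+1) → ℝ))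
        (fun i => WithLp.toLp 2 (fun idx => Fin.cases (b i) (fun j => A i j) idx : Fin (r+1) → ℝ)) k
    let cv : EuclideanSpace ℝ (Fin (r+1)) :=
      WithLp.toLp 2 (fun idx => Fin.cases c₀ (fun j => c j) idx : Fin (r+1) → ℝ)
    have hg0 : ∀ idx, g 0 idx = Fin.cases 1 (fun _ => 0) idx := fun _ => rfl
    have hgs : ∀ i idx, g i.succ idx = Fin.cases (b i) (fun j => A i j) idx := fun _ _ => rfl
    have hdual : ∀ y : EuclideanSpace ℝ (Fin (r+1)), (∀ k, 0 ≤ ⟪g k, y⟫) → 0 ≤ ⟪y, cv⟫ := by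
      intro y hy
      have hτ : 0 ≤ y 0 := by
        have := hy 0
        simpa [PiLp.inner_apply, RCLike.inner_apply, conj_trivial, Fin.sum_univ_succ, hg0] using this
      have hrow : ∀ i, 0 ≤ b i * y 0 + ∑ j, A i j * y j.succ := by
        intro i
        have := hy i.succ
        simpa [PiLp.inner_apply, RCLike.inner_apply, conj_trivial, Fin.sum_univ_succ, hgs, mul_comm] using this
      have goal_eq : ⟪y, cv⟫ = y 0 * c₀ + ∑ j, y j.succ * c j := by
        simp [PiLp.inner_apply, RCLike.inner_apply, conj_trivial, Fin.sum_univ_succ, cv, mul_comm]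
      rw [goal_eq]
      rcases hτ.eq_or_lt with hτ0 | hτpos
      · -- y 0 = 0
        obtain ⟨x₀, hx₀⟩ := hsat
        have hK : 0 ≤ c₀ + ∑ j, c j * x₀ j := h x₀ hx₀
        by_contra hneg
        push_neg at hneg
        rw [← hτ0, zero_mul, zero_add] at hneg
        set s := ∑ j, y j.succ * c j with hs
        set K := c₀ + ∑ j, c j * x₀ j with hKdef
        set lam := (K + 1) / (-s) with hlam
        have hlam0 : 0 ≤ lam := div_nonneg (by linarith) (by linarith)
        have hsat' : ∀ i, 0 ≤ b i + ∑ j, A i j * (x₀ j + lam * y j.succ) := by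
          intro i
          have e : ∑ j, A i j * (x₀ j + lam * y j.succ)
              = (∑ j, A i j * x₀ j) + lam * ∑ j, A i j * y j.succ := by
            rw [Finset.mul_sum, ← Finset.sum_add_distrib]
            exact Finset.sum_congr rfl fun j _ => by ring
          have hrow' := hrow i
          rw [← hτ0, mul_zero, zero_add] at hrow'
          have := hx₀ i
          rw [e]
          nlinarith
        have hfin := h _ hsat'
        have e2 : c₀ + ∑ j, c j * (x₀ j + lam * y j.succ) = K + lam * s := by
          rw [hKdef, hs, Finset.mul_sum, add_assoc, ← Finset.sum_add_distrib]
          congr 1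
          exact Finset.sum_congr rfl fun j _ => by ring
        have hsne : s ≠ 0 := ne_of_lt hneg
        have hls : lam * s = -(K + 1) := by
          rw [hlam, div_mul_eq_mul_div, div_neg, mul_div_assoc, div_self hsne, mul_one]
        rw [e2, hls] at hfin
        linarith
      · -- y 0 > 0
        have hx : ∀ i, 0 ≤ b i + ∑ j, A i j * (y j.succ / y 0) := by
          intro i
          have e : ∑ j, A i j * (y j.succ / y 0) = (∑ j, A i j * y j.succ) / y 0 := by
            rw [Finset.sum_div]
            exact Finset.sum_congr rfl fun j _ => by ring
          have e2 : (b i * y 0 + ∑ j, A i j * y j.succ) / y 0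
              = b i + (∑ j, A i j * y j.succ) / y 0 := by
            field_simp
          rw [e, ← e2]
          exact div_nonneg (hrow i) hτpos.le
        have hfin := h _ hx
        have e3 : ∑ j, c j * (y j.succ / y 0) = (∑ j, c j * y j.succ) / y 0 := by
          rw [Finset.sum_div]
          exact Finset.sum_congr rfl fun j _ => by ring
        rw [e3] at hfin
        have ecomm : ∑ j, y j.succ * c j = ∑ j, c j * y j.succ :=
          Finset.sum_congr rfl fun j _ => mul_comm _ _
        rw [ecomm]
        have h4 : 0 ≤ y 0 * (c₀ + (∑ j, c j * y j.succ) / y 0) :=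
          mul_nonneg hτpos.le hfin
        have h5 : y 0 * (c₀ + (∑ j, c j * y j.succ) / y 0)
            = y 0 * c₀ + ∑ j, c j * y j.succ := by
          field_simp
        rw [h5] at h4
        exact h4
    obtain ⟨t, ht, hsum⟩ := cone_mem_of_dual g cv hdual
    refine ⟨t 0, fun i => t i.succ, ht 0, fun i => ht _, ?_, ?_⟩
    · have h0 : (∑ k, t k • g k) 0 = cv 0 := by rw [hsum]
      rw [WithLp.ofLp_sum, Finset.sum_apply] at h0
      simp only [PiLp.smul_apply, smul_eq_mul, Fin.sum_univ_succ, hg0, hgs, cv] at h0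
      simp at h0
      simpa using h0.symm
    · intro j
      have hj : (∑ k, t k • g k) j.succ = cv j.succ := by rw [hsum]
      rw [WithLp.ofLp_sum, Finset.sum_apply] at hj
      simp only [PiLp.smul_apply, smul_eq_mul, Fin.sum_univ_succ, hg0, hgs, cv] at hj
      simp at hj
      simpa using hj.symm
  · rintro ⟨y₀, y, hy₀, hy, hc₀, hc⟩
    intro x hx
    have e : c₀ + ∑ j, c j * x j = y₀ + ∑ i, y i * (b i + ∑ j, A i j * x j) := by
      rw [hc₀]
      have : ∑ j, c j * x j = ∑ i, ∑ j, y i * A i j * x j := by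
        rw [Finset.sum_comm]
        exact Finset.sum_congr rfl fun j _ => by rw [hc j, Finset.sum_mul]
      rw [this, add_assoc, ← Finset.sum_add_distrib]
      congr 1
      exact Finset.sum_congr rfl fun i _ => by simp [mul_add, Finset.mul_sum, mul_assoc]
    rw [e]
    exact add_nonneg hy₀ (Finset.sum_nonneg fun i _ => mul_nonneg (hy i) (hx i))
end

section
/- An unsatisfiability criterion for affine systems: a system Φ of affine inequalities {gᵢ ≥ 0} over ℝ^r is unsatisfiable if and only if −1 can be written as y₀ + Σᵢ yᵢ·gᵢ with all yᵢ ≥ 0 (as an identity of affine polynomials). -/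
open Finset

private lemma exists_sandwich {ι : Type} (P Q : Finset ι) (lo hi : ι → ℝ)
    (h : ∀ p ∈ P, ∀ q ∈ Q, lo p ≤ hi q) :
    ∃ t : ℝ, (∀ p ∈ P, lo p ≤ t) ∧ (∀ q ∈ Q, t ≤ hi q) := by
  rcases P.eq_empty_or_nonempty with hP | hP
  · rcases Q.eq_empty_or_nonempty with hQ | hQ
    · exact ⟨0, by simp [hP], by simp [hQ]⟩
    · exact ⟨Q.inf' hQ hi, by simp [hP], fun q hq => Finset.inf'_le _ hq⟩
  · exact ⟨P.sup' hP lo, fun p hp => Finset.le_sup' _ hp,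
      fun q hq => Finset.sup'_le _ _ fun p hp => h p hp q hq⟩

private lemma farkas_unsat (r : ℕ) :
    ∀ {ι : Type} [Fintype ι] (b : ι → ℝ) (A : ι → Fin r → ℝ),
      (¬ ∃ x : Fin r → ℝ, ∀ i, 0 ≤ b i + ∑ j, A i j * x j) →
      ∃ y : ι → ℝ, (∀ i, 0 ≤ y i) ∧ (∀ j, ∑ i, y i * A i j = 0) ∧ ∑ i, y i * b i < 0 := by
  induction r with
  | zero =>
    intro ι _ b A hun
    classical
    push_neg at hun
    obtain ⟨i0, hi0⟩ := hun finZeroElim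
    refine ⟨fun i => if i = i0 then 1 else 0, ?_, ?_, ?_⟩
    · intro i; dsimp only; split <;> norm_num
    · exact fun j => j.elim0
    · simp only [ite_mul, one_mul, zero_mul, Finset.sum_ite_eq', Finset.mem_univ, if_true]
      simpa using hi0
  | succ r IH =>
    intro ι _ b A hun
    classical
    set a : ι → ℝ := fun i => A i (Fin.last r) with ha
    set B : ι → Fin r → ℝ := fun i j => A i j.castSucc with hB
    -- new index type
    let Z := {i : ι // a i = 0}
    let P := {i : ι // 0 < a i}
    let N := {i : ι // a i < 0}
    let b' : Z ⊕ P × N → ℝ :=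
      Sum.elim (fun i0 => b i0.1) (fun pq => a pq.1.1 * b pq.2.1 - a pq.2.1 * b pq.1.1)
    let A' : Z ⊕ P × N → Fin r → ℝ :=
      Sum.elim (fun i0 j => B i0.1 j)
        (fun pq j => a pq.1.1 * B pq.2.1 j - a pq.2.1 * B pq.1.1 j)
    -- the eliminated system is unsatisfiable
    have hun' : ¬ ∃ x : Fin r → ℝ, ∀ k, 0 ≤ b' k + ∑ j, A' k j * x j := by
      rintro ⟨x', hx'⟩
      apply hun
      set f : ι → ℝ := fun i => b i + ∑ j, B i j * x' j with hf
      have hZ : ∀ i0 : Z, 0 ≤ f i0.1 := fun i0 => hx' (Sum.inl i0)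
      have hPN : ∀ (p : P) (q : N), 0 ≤ a p.1 * f q.1 - a q.1 * f p.1 := by
        intro p q
        have := hx' (Sum.inr (p, q))
        simp only [b', A', Sum.elim_inr, hf] at this ⊢
        rw [show (∑ j, (a p.1 * B q.1 j - a q.1 * B p.1 j) * x' j)
            = a p.1 * ∑ j, B q.1 j * x' j - a q.1 * ∑ j, B p.1 j * x' j by
          rw [Finset.mul_sum, Finset.mul_sum, ← Finset.sum_sub_distrib]; congr 1; ext j; ring]
          at this
        linarith
      have hcond : ∀ p ∈ univ.filter (fun i => 0 < a i), ∀ q ∈ univ.filter (fun i => a i < 0),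
          -f p / a p ≤ -f q / a q := by
        intro p hp q hq
        simp only [Finset.mem_filter] at hp hq
        have hpq := hPN ⟨p, hp.2⟩ ⟨q, hq.2⟩
        have e1 : -f q / a q = f q / -a q := by rw [div_neg, neg_div]
        rw [e1, div_le_div_iff₀ hp.2 (neg_pos.2 hq.2)]
        nlinarith
      obtain ⟨t, htP, htN⟩ := exists_sandwich (univ.filter (fun i => 0 < a i))
        (univ.filter (fun i => a i < 0)) (fun i => -f i / a i) (fun i => -f i / a i) hcond
      refine ⟨Fin.snoc x' t, fun i => ?_⟩
      · 
        have hsum : b i + ∑ j, A i j * (Fin.snoc x' t : Fin (r+1) → ℝ) j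
            = f i + a i * t := by
          rw [Fin.sum_univ_castSucc]
          simp only [hf, hB, Fin.snoc_castSucc, Fin.snoc_last]
          ring
        rw [hsum]
        rcases lt_trichotomy (a i) 0 with hai | hai | hai
        · have := htN i (by simp [hai])
          rw [le_div_iff_of_neg hai] at this
          nlinarith
        · have : (0:ℝ) ≤ f i := hZ ⟨i, hai⟩
          rw [hai]; linarith
        · have := htP i (by simp [hai])
          rw [div_le_iff₀ hai] at this
          linarith
    -- get a certificate for the eliminated system
    obtain ⟨z, hz0, hzA, hzb⟩ := IH b' A' hun'
    -- combination matrix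
    let c : Z ⊕ P × N → ι → ℝ :=
      Sum.elim (fun i0 i => if i = i0.1 then 1 else 0)
        (fun pq i => (if i = pq.1.1 then -a pq.2.1 else 0) + (if i = pq.2.1 then a pq.1.1 else 0))
    have csum : ∀ (v : ι → ℝ) (k : Z ⊕ P × N), ∑ i, c k i * v i =
        Sum.elim (fun i0 : Z => v i0.1)
          (fun pq : P × N => -a pq.2.1 * v pq.1.1 + a pq.1.1 * v pq.2.1) k := by
      intro v k
      rcases k with i0 | pq
      · simp [c, ite_mul, Finset.sum_ite_eq']
      · simp [c, add_mul, ite_mul, Finset.sum_add_distrib, Finset.sum_ite_eq']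
    refine ⟨fun i => ∑ k, z k * c k i, ?_, ?_, ?_⟩
    · intro i
      refine Finset.sum_nonneg fun k _ => mul_nonneg (hz0 k) ?_
      rcases k with i0 | pq
      · simp only [c, Sum.elim_inl]; split <;> norm_num
      · have h1 := pq.1.2; have h2 := pq.2.2
        simp only [c, Sum.elim_inr]
        split <;> split <;> linarith
    · intro j
      have swap : ∀ v : ι → ℝ, ∑ i, (∑ k, z k * c k i) * v i = ∑ k, z k * ∑ i, c k i * v i := by
        intro v
        simp_rw [Finset.sum_mul, Finset.mul_sum]
        rw [Finset.sum_comm]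
        simp_rw [mul_assoc]
      refine Fin.lastCases ?_ ?_ j
      · rw [swap]
        apply Finset.sum_eq_zero
        intro k _
        rw [csum a k]  -- careful: v = fun i => A i last = a
        rcases k with i0 | pq
        · simp only [Sum.elim_inl]
          rw [i0.2, mul_zero]
        · simp only [Sum.elim_inr]
          ring
      · intro j'
        rw [swap]
        have : ∀ k, ∑ i, c k i * A i j'.castSucc = A' k j' := by
          intro k
          rw [csum (fun i => A i j'.castSucc) k]
          rcases k with i0 | pq
          · simp [A', B]
          · simp [A', B]; ring
        simp_rw [this]
        exact hzA j'
    · have swap : ∑ i, (∑ k, z k * c k i) * b i = ∑ k, z k * ∑ i, c k i * b i := by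
        simp_rw [Finset.sum_mul, Finset.mul_sum]
        rw [Finset.sum_comm]
        simp_rw [mul_assoc]
      rw [swap]
      have : ∀ k, ∑ i, c k i * b i = b' k := by
        intro k
        rw [csum b k]
        rcases k with i0 | pq
        · simp [b']
        · simp [b']; ring
      simp_rw [this]
      exact hzb

/-- Unsatisfiability criterion for affine systems: the system
`bᵢ + Σⱼ Aᵢⱼ xⱼ ≥ 0` (i = 1,…,m) is unsatisfiable iff `−1` can be written as
`y₀ + Σᵢ yᵢ · gᵢ` with all `yᵢ ≥ 0`, as an identity of affine polynomials. -/
theorem affine_unsat_iff {r m : ℕ} (b : Fin m → ℝ) (A : Fin m → Fin r → ℝ) :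
    (¬ ∃ x : Fin r → ℝ, ∀ i, 0 ≤ b i + ∑ j, A i j * x j) ↔
      ∃ (y₀ : ℝ) (y : Fin m → ℝ), 0 ≤ y₀ ∧ (∀ i, 0 ≤ y i) ∧
        ∀ x : Fin r → ℝ,
          (-1 : ℝ) = y₀ + ∑ i, y i * (b i + ∑ j, A i j * x j) := by
  constructor
  · intro hun
    obtain ⟨y, hy0, hyA, hyb⟩ := farkas_unsat r b A hun
    set s : ℝ := ∑ i, y i * b i with hs
    refine ⟨0, fun i => y i / (-s), le_refl 0, fun i => div_nonneg (hy0 i) (by linarith), ?_⟩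
    intro x
    have key : ∑ i, y i * (b i + ∑ j, A i j * x j) = s := by
      simp_rw [mul_add, Finset.sum_add_distrib]
      have h2 : ∑ i, y i * ∑ j, A i j * x j = ∑ j, (∑ i, y i * A i j) * x j := by
        simp_rw [Finset.mul_sum, Finset.sum_mul]
        rw [Finset.sum_comm]
        simp_rw [mul_assoc]
      rw [h2]
      simp [hyA, hs]
    simp_rw [div_mul_eq_mul_div, ← Finset.sum_div]
    rw [key]
    have hne : s ≠ 0 := ne_of_lt hyb
    field_simp
    ring
  · rintro ⟨y₀, y, hy₀, hy, hid⟩ ⟨x, hx⟩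
    have := hid x
    have hsum : 0 ≤ ∑ i, y i * (b i + ∑ j, A i j * x j) :=
      Finset.sum_nonneg fun i _ => mul_nonneg (hy i) (hx i)
    linarith
end

section
/- Unsatisfiability certificate with slack variables (soundness): let g₁,...,g_k ∈ ℝ[x₁,...,xₙ] with associated relation symbols ⋈ᵢ ∈ {>, ≥}, and let g̃ᵢ = gᵢ − wᵢ². Suppose for some index j with ⋈ⱼ equal to >, there exist α ∈ ℕ, polynomials h₁,...,h_k ∈ ℝ[x₁,...,xₙ,w₁,...,w_k], and a sum of squares h₀ such that wⱼ^{4α} = Σᵢ hᵢ·g̃ᵢ − h₀. Then the system {g₁ ⋈₁ 0, ..., g_k ⋈_k 0} has no solution in ℝⁿ. -/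
open MvPolynomial

/-- A polynomial is a sum of squares if it is a finite sum of squares of polynomials. -/
def IsSOS {σ : Type*} (p : MvPolynomial σ ℝ) : Prop :=
  ∃ (k : ℕ) (g : Fin k → MvPolynomial σ ℝ), p = ∑ i, (g i) ^ 2

/-- Unsatisfiability certificate with slack variables (soundness): with
`g̃ᵢ = gᵢ − wᵢ²` and strictness flags `s` (`s i = true` meaning `gᵢ > 0`),
if for some index `j` with a strict inequality there are `α`, polynomials `hᵢ`
and a sum of squares `h₀` with `wⱼ^{4α} = Σᵢ hᵢ·g̃ᵢ − h₀`, then the system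
`{gᵢ ⋈ᵢ 0}` has no solution in `ℝⁿ`. -/
theorem slack_unsat_soundness {n k : ℕ} (G : Fin k → MvPolynomial (Fin n) ℝ)
    (s : Fin k → Bool) (j : Fin k) (hj : s j = true) (α : ℕ)
    (h : Fin k → MvPolynomial (Fin n ⊕ Fin k) ℝ)
    (h₀ : MvPolynomial (Fin n ⊕ Fin k) ℝ) (hh₀ : IsSOS h₀)
    (hrep : (X (Sum.inr j : Fin n ⊕ Fin k)) ^ (4 * α) =
      (∑ i, h i * (rename Sum.inl (G i) - (X (Sum.inr i : Fin n ⊕ Fin k)) ^ 2))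
        - h₀) :
    ¬ ∃ x : Fin n → ℝ, ∀ i,
        if s i then 0 < eval x (G i) else 0 ≤ eval x (G i) := by
  rintro ⟨x, hx⟩
  set w : Fin k → ℝ := fun i => Real.sqrt (eval x (G i)) with hw
  set y : Fin n ⊕ Fin k → ℝ := Sum.elim x w with hy
  have hGnn : ∀ i, 0 ≤ eval x (G i) := by
    intro i
    have := hx i
    by_cases hsi : s i = true
    · simp [hsi] at this; linarith
    · simp [hsi] at this; simpa using this
  have hwsq : ∀ i, w i ^ 2 = eval x (G i) := by
    intro i; rw [sq, hw]; exact Real.mul_self_sqrt (hGnn i)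
  have hev := congrArg (eval y) hrep
  simp only [map_sub, map_sum, map_mul, map_pow, eval_X, eval_rename] at hev
  have hcomp : y ∘ Sum.inl = x := by
    funext t; simp [hy]
  rw [hcomp] at hev
  have hsumz : (∑ i, eval y (h i) * (eval x (G i) - y (Sum.inr i) ^ 2)) = 0 := by
    apply Finset.sum_eq_zero
    intro i _
    have : y (Sum.inr i) = w i := by simp [hy]
    rw [this, hwsq i]; ring
  rw [hsumz] at hev
  have hh0nn : 0 ≤ eval y h₀ := by
    obtain ⟨m, g, hg⟩ := hh₀
    rw [hg]
    simp only [map_sum, map_pow]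
    exact Finset.sum_nonneg fun i _ => sq_nonneg _
  have hwj : 0 < w j := by
    have := hx j
    rw [hj] at this; simp at this
    exact Real.sqrt_pos.mpr this
  have hyj : y (Sum.inr j) = w j := by simp [hy]
  rw [hyj] at hev
  have : 0 < w j ^ (4 * α) := pow_pos hwj _
  linarith
end
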